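/- For every finite simple graph G = (V,E) with n vertices and every vertex x, the expectation of the index i_f(x) over all n! bijections f : V → {1,…,n}, each taken with equal probability 1/n!, equals the curvature: (1/n!) Σ_{f bijection} i_f(x) = K(x). -/

import Mathlib

/-!
Index expectation: averaging the Poincaré–Hopf index `i_f(x)` over all `n!` bijections
`f : V → {1,…,n}` (uniformly) gives the curvature `K(x)`.
-/

noncomputable section

variable {V : Type} [Fintype V] [DecidableEq V]

/-- `numCliques G k` is the number of `k`-element cliques of `G`. -/
noncomputable def numCliques (G : SimpleGraph V) (k : ℕ) : ℕ :=
  letI : DecidableRel G.Adj := Classical.decRel _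
  (G.cliqueFinset k).card

/-- Euler characteristic `χ(G) = Σ_{k ≥ 0} (-1)^k v_k`, where `v_k` is the number of
`(k+1)`-element cliques of `G`. -/
noncomputable def eulerChar (G : SimpleGraph V) : ℤ :=
  ∑ k ∈ Finset.range (Fintype.card V), (-1 : ℤ) ^ k * numCliques G (k + 1)

/-- The curvature `K(x) = Σ_{k ≥ 0} (-1)^k V_{k-1}(x)/(k+1)`, where `V_{k-1}(x)` is the number of
`k`-element cliques of the unit sphere `S(x)`, with `V_{-1}(x) = 1`. -/
noncomputable def curvature (G : SimpleGraph V) (x : V) : ℚ :=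
  letI : Fintype ↥(G.neighborSet x) := (Set.toFinite _).fintype
  ∑ k ∈ Finset.range (Fintype.card V + 1),
    (-1 : ℚ) ^ k * (numCliques (G.induce (G.neighborSet x)) k : ℚ) / (k + 1)

/-- The index `i_f(x) = 1 - χ(S_f^-(x))`, where `S_f^-(x)` is the subgraph of `G` induced
on `{y : y adjacent to x and f(y) < f(x)}`; here `f : V → {1,…,n}`. -/
noncomputable def fIndex (G : SimpleGraph V) (f : V → Fin (Fintype.card V)) (x : V) : ℤ :=
  letI : Fintype ↥{y | G.Adj x y ∧ f y < f x} := (Set.toFinite _).fintype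
  1 - eulerChar (G.induce {y | G.Adj x y ∧ f y < f x})

/-! ### Auxiliary lemmas -/

open Finset

/-- The finset of `k`-cliques of `G` whose vertices all lie in `s`. -/
noncomputable def cliquesIn (G : SimpleGraph V) (s : Set V) (k : ℕ) : Finset (Finset V) :=
  letI : DecidableRel G.Adj := Classical.decRel _
  letI : DecidablePred (· ∈ s) := fun _ => Classical.dec _
  (G.cliqueFinset k).filter fun T => ∀ y ∈ T, y ∈ s

lemma mem_cliquesIn {G : SimpleGraph V} {s : Set V} {k : ℕ} {T : Finset V} :
    T ∈ cliquesIn G s k ↔ G.IsNClique k T ∧ ∀ y ∈ T, y ∈ s := by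
  simp only [cliquesIn, Finset.mem_filter, SimpleGraph.mem_cliqueFinset_iff]

/-- A `0`-clique count is `1` (the empty clique), for any instances. -/
lemma numCliques_zero' {W : Type} {iF : Fintype W} {iD : DecidableEq W} (G : SimpleGraph W) :
    @numCliques W iF iD G 0 = 1 := by
  unfold numCliques
  rw [Finset.card_eq_one]
  refine ⟨∅, ?_⟩
  ext T
  simp only [Finset.mem_singleton, SimpleGraph.mem_cliqueFinset_iff, SimpleGraph.isNClique_iff,
    Finset.card_eq_zero]
  exact ⟨fun h => h.2, fun h => ⟨by simp [h], h⟩⟩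

lemma numCliques_eq_zero_of_lt' {W : Type} {iF : Fintype W} {iD : DecidableEq W}
    (G : SimpleGraph W) {k : ℕ} (hk : Nat.card W < k) :
    @numCliques W iF iD G k = 0 := by
  unfold numCliques
  rw [Finset.card_eq_zero, Finset.eq_empty_iff_forall_notMem]
  intro T hT
  simp only [SimpleGraph.mem_cliqueFinset_iff, SimpleGraph.isNClique_iff] at hT
  rw [Nat.card_eq_fintype_card] at hk
  exact absurd (hT.2 ▸ Finset.card_le_univ T) (by simpa using hk)

/-- The Euler characteristic as a sum over any sufficiently long range. -/
lemma eulerChar_eq_sum' {W : Type} {iF : Fintype W} {iD : DecidableEq W} (G : SimpleGraph W)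
    {m : ℕ} (hm : Nat.card W ≤ m) :
    @eulerChar W iF iD G
      = ∑ k ∈ Finset.range m, (-1 : ℤ) ^ k * @numCliques W iF iD G (k + 1) := by
  unfold eulerChar
  have hcard : @Fintype.card W iF ≤ m := by rwa [Nat.card_eq_fintype_card] at hm
  apply Finset.sum_subset (Finset.range_subset_range.2 hcard)
  intro k _ hk
  rw [numCliques_eq_zero_of_lt' G (k := k + 1)
    (by rw [Nat.card_eq_fintype_card]; simp only [Finset.mem_range, not_lt] at hk; omega)]
  simp

/-- Cliques of an induced subgraph are cliques of the ambient graph inside the set. -/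
lemma numCliques_induce' (G : SimpleGraph V) (s : Set V) {iF : Fintype ↥s}
    {iD : DecidableEq ↥s} (k : ℕ) :
    @numCliques ↥s iF iD (G.induce s) k = (cliquesIn G s k).card := by
  classical
  unfold numCliques
  apply Finset.card_bij (fun (t : Finset ↥s) _ => t.map (Function.Embedding.subtype _))
  · intro t ht
    rw [SimpleGraph.mem_cliqueFinset_iff, SimpleGraph.isNClique_iff] at ht
    rw [mem_cliquesIn]
    refine ⟨⟨?_, by rw [Finset.card_map]; exact ht.2⟩, ?_⟩
    · rintro a ha b hb hab
      simp only [Finset.coe_map, Set.mem_image, Finset.mem_coe,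
        Function.Embedding.coe_subtype] at ha hb
      obtain ⟨a', ha', rfl⟩ := ha
      obtain ⟨b', hb', rfl⟩ := hb
      have := ht.1 ha' hb' (fun h => hab (congrArg Subtype.val h))
      simpa using this
    · intro y hy
      simp only [Finset.mem_map, Function.Embedding.coe_subtype] at hy
      obtain ⟨⟨y', hy'⟩, _, rfl⟩ := hy
      exact hy'
  · intro t₁ h₁ t₂ h₂ h
    exact Finset.map_injective _ h
  · intro T hT
    rw [mem_cliquesIn] at hT
    refine ⟨T.subtype (· ∈ s), ?_, ?_⟩
    · rw [SimpleGraph.mem_cliqueFinset_iff, SimpleGraph.isNClique_iff]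
      constructor
      · rintro ⟨a, hA⟩ ha ⟨b, hB⟩ hb hab
        simp only [Finset.mem_coe, Finset.mem_subtype] at ha hb
        have := hT.1.1 ha hb (by simpa using hab)
        simpa using this
      · rw [Finset.card_subtype, Finset.filter_true_of_mem hT.2]
        exact hT.1.2
    · rw [Finset.subtype_map, Finset.filter_true_of_mem hT.2]

/-- The number of bijections making `x` the maximum of `S`, times `|S|`, is `n!`. -/
lemma count_argmax (S : Finset V) {x : V} (hx : x ∈ S) :
    (Finset.univ.filter
        (fun f : V ≃ Fin (Fintype.card V) => ∀ y ∈ S, y ≠ x → f y < f x)).card * S.card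
      = (Fintype.card V).factorial := by
  classical
  have hne : S.Nonempty := ⟨x, hx⟩
  set n := Fintype.card V
  have key : ∀ z ∈ S, (univ.filter fun f : V ≃ Fin n => ∀ y ∈ S, y ≠ z → f y < f z).card
      = (univ.filter fun f : V ≃ Fin n => ∀ y ∈ S, y ≠ x → f y < f x).card := by
    intro z hz
    by_cases hxz : z = x
    · subst hxz; rfl
    apply Finset.card_bij' (fun f _ => (Equiv.swap x z).trans f)
      (fun f _ => (Equiv.swap x z).trans f)
    · intro f hf
      simp only [mem_filter, mem_univ, true_and] at hf ⊢
      intro y hy hyx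
      simp only [Equiv.trans_apply]
      rw [Equiv.swap_apply_left]
      by_cases hyz : y = z
      · subst hyz
        rw [Equiv.swap_apply_right]
        exact hf x hx (Ne.symm hxz)
      · rw [Equiv.swap_apply_of_ne_of_ne hyx hyz]
        exact hf y hy hyz
    · intro f hf
      simp only [mem_filter, mem_univ, true_and] at hf ⊢
      intro y hy hyz
      simp only [Equiv.trans_apply]
      rw [Equiv.swap_apply_right]
      by_cases hyx : y = x
      · subst hyx
        rw [Equiv.swap_apply_left]
        exact hf z hz hxz
      · rw [Equiv.swap_apply_of_ne_of_ne hyx hyz]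
        exact hf y hy hyx
    · intro f _
      ext y
      simp [Equiv.swap_apply_self]
    · intro f _
      ext y
      simp [Equiv.swap_apply_self]
  have hmax : ∀ f : V ≃ Fin n, ∃ z ∈ S, ∀ y ∈ S, f y ≤ f z :=
    fun f => S.exists_max_image f hne
  choose g hgS hgmax using hmax
  have fiber_eq : ∀ z ∈ S, (univ.filter fun f : V ≃ Fin n => g f = z)
      = univ.filter fun f : V ≃ Fin n => ∀ y ∈ S, y ≠ z → f y < f z := by
    intro z hz
    ext f
    simp only [mem_filter, mem_univ, true_and]
    constructor
    · rintro rfl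
      intro y hy hyz
      exact lt_of_le_of_ne (hgmax f y hy) (fun h => hyz (f.injective h))
    · intro h
      by_contra hne'
      exact absurd (hgmax f z hz) (not_le.2 (h (g f) (hgS f) hne'))
  have total : (univ : Finset (V ≃ Fin n)).card
      = ∑ z ∈ S, (univ.filter fun f : V ≃ Fin n => g f = z).card :=
    Finset.card_eq_sum_card_fiberwise (fun f _ => hgS f)
  rw [Finset.card_univ, Fintype.card_equiv (Fintype.equivFin V)] at total
  rw [total]
  rw [Finset.sum_congr rfl (fun z hz => by rw [fiber_eq z hz, key z hz])]
  rw [Finset.sum_const, smul_eq_mul, mul_comm]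

/-- The expected number of bijections putting all of `T` below `x`, in `ℚ`. -/
lemma count_before (T : Finset V) {x : V} (hx : x ∉ T) :
    ((Finset.univ.filter
        (fun f : V ≃ Fin (Fintype.card V) => ∀ y ∈ T, f y < f x)).card : ℚ)
      = (Fintype.card V).factorial / (T.card + 1) := by
  classical
  have h := count_argmax (insert x T) (mem_insert_self x T)
  have hfe : (univ.filter fun f : V ≃ Fin (Fintype.card V) =>
        ∀ y ∈ insert x T, y ≠ x → f y < f x)
      = univ.filter fun f : V ≃ Fin (Fintype.card V) => ∀ y ∈ T, f y < f x := by
    apply Finset.filter_congr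
    intro f _
    constructor
    · intro h y hy
      exact h y (mem_insert_of_mem hy) (fun hxy => hx (hxy ▸ hy))
    · intro h y hy hyx
      rcases mem_insert.1 hy with rfl | hyT
      · exact absurd rfl hyx
      · exact h y hyT
  rw [hfe, card_insert_of_notMem hx] at h
  rw [eq_div_iff (by positivity)]
  exact_mod_cast h

/-! ### Main theorem -/

/-- **Index expectation**: for every vertex `x`,
`(1/n!) Σ_{f bijection} i_f(x) = K(x)`, the sum over all `n!` bijections `f : V → {1,…,n}`. -/
theorem index_expectation (G : SimpleGraph V) (x : V) :
    (∑ f : V ≃ Fin (Fintype.card V), (fIndex G (⇑f) x : ℚ)) / (Fintype.card V).factorial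
      = curvature G x := by
  classical
  set n := Fintype.card V with hn
  set C : ℕ → Finset (Finset V) := fun k => cliquesIn G (G.neighborSet x) (k + 1) with hC
  -- Step 1: the cliques of `S_f^-(x)` are the cliques of `S(x)` lying below `x`
  have hsplit : ∀ (f : V ≃ Fin n) (k : ℕ),
      cliquesIn G {y | G.Adj x y ∧ f y < f x} k
        = (cliquesIn G (G.neighborSet x) k).filter (fun T => ∀ y ∈ T, f y < f x) := by
    intro f k
    ext T
    simp only [mem_cliquesIn, Finset.mem_filter, Set.mem_setOf_eq, SimpleGraph.mem_neighborSet]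
    constructor
    · rintro ⟨hc, h⟩
      exact ⟨⟨hc, fun y hy => (h y hy).1⟩, fun y hy => (h y hy).2⟩
    · rintro ⟨⟨hc, h1⟩, h2⟩
      exact ⟨hc, fun y hy => ⟨h1 y hy, h2 y hy⟩⟩
  have hfi : ∀ f : V ≃ Fin n, (fIndex G (⇑f) x : ℚ)
      = 1 - ∑ k ∈ Finset.range n, (-1 : ℚ) ^ k *
          (((C k).filter (fun T => ∀ y ∈ T, (⇑f) y < f x)).card : ℚ) := by
    intro f
    unfold fIndex
    have hm : Nat.card ↥{y | G.Adj x y ∧ (⇑f) y < f x} ≤ n :=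
      le_trans (Nat.card_le_card_of_injective Subtype.val Subtype.val_injective)
        (le_of_eq Nat.card_eq_fintype_card)
    rw [eulerChar_eq_sum' _ hm]
    push_cast
    congr 1
    apply Finset.sum_congr rfl
    intro k _
    rw [numCliques_induce', hsplit f (k + 1)]
  -- Step 2: averaging over bijections
  have hcount : ∀ k : ℕ, ∑ f : V ≃ Fin n,
        (((C k).filter (fun T => ∀ y ∈ T, (⇑f) y < f x)).card : ℚ)
      = ((C k).card : ℚ) * ((n.factorial : ℚ) / (k + 2)) := by
    intro k
    have h1 : ∀ f : V ≃ Fin n, (((C k).filter (fun T => ∀ y ∈ T, (⇑f) y < f x)).card : ℚ)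
        = ∑ T ∈ C k, if (∀ y ∈ T, (⇑f) y < f x) then (1 : ℚ) else 0 := by
      intro f
      rw [Finset.sum_boole]
    rw [Finset.sum_congr rfl (fun f _ => h1 f), Finset.sum_comm]
    have h2 : ∀ T ∈ C k, (∑ f : V ≃ Fin n, if (∀ y ∈ T, (⇑f) y < f x) then (1 : ℚ) else 0)
        = (n.factorial : ℚ) / (k + 2) := by
      intro T hT
      obtain ⟨hclique, hsub⟩ := mem_cliquesIn.1 hT
      have hxT : x ∉ T := fun h => G.irrefl (hsub x h)
      rw [Finset.sum_boole, count_before T hxT, hclique.2]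
      push_cast
      ring_nf
      exact mul_comm _ _
    rw [Finset.sum_congr rfl h2, Finset.sum_const, nsmul_eq_mul]
  -- Step 3: curvature in a convenient form
  have hcurv : curvature G x
      = 1 - ∑ k ∈ Finset.range n, (-1 : ℚ) ^ k * ((C k).card : ℚ) / (k + 2) := by
    unfold curvature
    letI : Fintype ↥(G.neighborSet x) := (Set.toFinite _).fintype
    rw [← hn, Finset.sum_range_succ']
    have h1 : ∀ k ∈ Finset.range n,
        (-1 : ℚ) ^ (k + 1) *
            ((numCliques (G.induce (G.neighborSet x)) (k + 1) :
              ℕ) : ℚ) / ((((k + 1) : ℕ) : ℚ) + 1)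
          = -((-1 : ℚ) ^ k * ((C k).card : ℚ) / (k + 2)) := by
      intro k _
      rw [numCliques_induce']
      push_cast
      ring
    rw [Finset.sum_congr rfl h1, Finset.sum_neg_distrib, numCliques_zero']
    push_cast
    ring
  -- Step 4: combine
  have hNpos : (0 : ℚ) < (n.factorial : ℚ) := by positivity
  have main : (∑ f : V ≃ Fin n, (fIndex G (⇑f) x : ℚ))
      = (n.factorial : ℚ)
        - ∑ k ∈ Finset.range n, (-1 : ℚ) ^ k * (((C k).card : ℚ)
            * ((n.factorial : ℚ) / (k + 2))) := by
    rw [Finset.sum_congr rfl (fun f _ => hfi f), Finset.sum_sub_distrib, Finset.sum_const,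
      Finset.card_univ, Fintype.card_equiv (Fintype.equivFin V), nsmul_eq_mul, mul_one]
    congr 1
    rw [Finset.sum_comm]
    apply Finset.sum_congr rfl
    intro k _
    rw [← Finset.mul_sum, hcount k]
  rw [div_eq_iff (ne_of_gt hNpos), hcurv, main]
  have h2 : ∀ k ∈ Finset.range n, (-1 : ℚ) ^ k * (((C k).card : ℚ)
        * ((n.factorial : ℚ) / (k + 2)))
      = ((-1 : ℚ) ^ k * ((C k).card : ℚ) / (k + 2)) * (n.factorial : ℚ) := by
    intro k _
    ring
  rw [Finset.sum_congr rfl h2, ← Finset.sum_mul]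
  ring
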